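/- In masked diffusion (prior π = m, a mask one-hot vector with ⟨m, x⟩ = 0 for all data one-hots x), the general posterior formula simplifies: if z_t ≠ m then q(z_s|z_t,x) = Cat(z_t) (the token is carried over deterministically), and if z_t = m then q(z_s|z_t,x) = Cat( ((1−α_s) m + (α_s−α_t) x) / (1−α_t) ). -/

import Mathlib

open Finset Real Filter MeasureTheory
open scoped BigOperators Classical

noncomputable section

variable {Ω : Type*} [Fintype Ω]

/-- A probability mass function on a finite type. -/
def IsPMF {σ : Type*} [Fintype σ] (μ : σ → ℝ) : Prop := (∀ s, 0 ≤ μ s) ∧ ∑ s, μ s = 1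

/-- Probability of an event under a pmf. -/
def pr (μ : Ω → ℝ) (E : Ω → Prop) : ℝ := ∑ ω, if E ω then μ ω else 0

/-- Conditional probability of `E` given `F`. -/
def condPr (μ : Ω → ℝ) (E F : Ω → Prop) : ℝ := pr μ (fun ω => E ω ∧ F ω) / pr μ F

/-- Shannon entropy of a random variable. -/
def entropy {γ : Type*} [Fintype γ] (μ : Ω → ℝ) (C : Ω → γ) : ℝ :=
  - ∑ c, pr μ (fun ω => C ω = c) * Real.log (pr μ (fun ω => C ω = c))

/-- Conditional entropy H(X | C). -/
def condEntropy {γ δ : Type*} [Fintype γ] [Fintype δ] (μ : Ω → ℝ) (X : Ω → δ) (C : Ω → γ) : ℝ :=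
  - ∑ x, ∑ c, pr μ (fun ω => X ω = x ∧ C ω = c) *
      Real.log (pr μ (fun ω => X ω = x ∧ C ω = c) / pr μ (fun ω => C ω = c))

/-- Mutual information I(A;B). -/
def mutInfo {α β : Type*} [Fintype α] [Fintype β] (μ : Ω → ℝ) (A : Ω → α) (B : Ω → β) : ℝ :=
  ∑ a, ∑ b, pr μ (fun ω => A ω = a ∧ B ω = b) *
    Real.log (pr μ (fun ω => A ω = a ∧ B ω = b) /
      (pr μ (fun ω => A ω = a) * pr μ (fun ω => B ω = b)))

/-- Conditional mutual information I(A;B|C). -/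
def condMutInfo {α β γ : Type*} [Fintype α] [Fintype β] [Fintype γ]
    (μ : Ω → ℝ) (A : Ω → α) (B : Ω → β) (C : Ω → γ) : ℝ :=
  ∑ a, ∑ b, ∑ c,
    pr μ (fun ω => A ω = a ∧ B ω = b ∧ C ω = c) *
      Real.log (pr μ (fun ω => A ω = a ∧ B ω = b ∧ C ω = c) * pr μ (fun ω => C ω = c) /
        (pr μ (fun ω => A ω = a ∧ C ω = c) * pr μ (fun ω => B ω = b ∧ C ω = c)))

/-- Conditional total correlation TC(Z|W) = E_W [ KL( p(Z|W) ‖ ∏_ℓ p(Z^ℓ|W) ) ]. -/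
def condTC {L : ℕ} {α β : Type*} [Fintype α] [Fintype β] (μ : Ω → ℝ)
    (Z : Ω → (Fin L → α)) (W : Ω → β) : ℝ :=
  ∑ w, pr μ (fun ω => W ω = w) * ∑ z : Fin L → α,
    condPr μ (fun ω => Z ω = z) (fun ω => W ω = w) *
      Real.log (condPr μ (fun ω => Z ω = z) (fun ω => W ω = w) /
        ∏ ℓ, condPr μ (fun ω => Z ω ℓ = z ℓ) (fun ω => W ω = w))

/-- The one-hot vector at index `i`. -/
def oneHot {K : ℕ} (i : Fin K) : Fin K → ℝ := fun j => if j = i then 1 else 0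

/-- The general interpolating-diffusion posterior
q(z_s|z_t,x) = Cat([α_{t|s} z_t + (1−α_{t|s}) 1 piᵀz_t] ⊙ [α_s x + (1−α_s)pi]
                   / (α_t z_tᵀx + (1−α_t) z_tᵀpi)),
evaluated at the j-th category, with z_t = oneHot k and x = oneHot i. -/
def post {K : ℕ} (pi : Fin K → ℝ) (αs αt : ℝ) (k i j : Fin K) : ℝ :=
  (((αt / αs) * oneHot k j + (1 - αt / αs) * pi k) *
      (αs * oneHot i j + (1 - αs) * pi j)) /
    (αt * oneHot i k + (1 - αt) * pi k)

/-- in masked diffusion (prior = mask one-hot m orthogonal to data one-hots),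
the posterior simplifies: if z_t ≠ m (so z_t = x, i.e. k = i) then q(z_s|z_t,x) = Cat(z_t),
and if z_t = m then q(z_s|z_t,x) = Cat(((1−α_s)m + (α_s−α_t)x)/(1−α_t)). -/
theorem stmt8 {K : ℕ} (mIdx i : Fin K) (him : i ≠ mIdx)
    (αs αt : ℝ) (h0 : 0 < αt) (hts : αt < αs) (hs1 : αs ≤ 1) :
    (∀ j : Fin K, post (oneHot mIdx) αs αt i i j = oneHot i j)
    ∧ (∀ j : Fin K, post (oneHot mIdx) αs αt mIdx i j
        = ((1 - αs) * oneHot mIdx j + (αs - αt) * oneHot i j) / (1 - αt)) := by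
  have hαs : αs ≠ 0 := by linarith
  have hαt : αt ≠ 0 := ne_of_gt h0
  constructor
  · intro j
    simp only [post, oneHot, if_neg him]
    by_cases hj : j = i
    · subst hj
      simp only [if_pos rfl, if_true, mul_zero, zero_mul, add_zero, zero_add, mul_one, if_neg him, if_neg (Ne.symm him)]
      field_simp
    · simp only [if_neg hj, if_pos rfl]
      rcases eq_or_ne j mIdx with hm | hm <;> simp [hm, hαt]
  · intro j
    simp only [post, oneHot, if_neg him, if_pos rfl]
    by_cases hj : j = mIdx
    · subst hj
      simp only [if_pos rfl, if_true, mul_zero, zero_mul, add_zero, zero_add, mul_one, if_neg him, if_neg (Ne.symm him)]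
      have h1 : (1:ℝ) - αt ≠ 0 := by linarith
      field_simp
      ring
    · simp only [if_neg hj, if_neg (Ne.symm hj)]
      by_cases hji : j = i
      · subst hji
        simp only [if_pos rfl, if_true, mul_zero, zero_mul, add_zero, zero_add, mul_one, if_neg (Ne.symm him)]
        have h1 : (1:ℝ) - αt ≠ 0 := by linarith
        field_simp
      · simp [hji]
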